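/- Let α̃ be the maximal solution of α̃'' = (1/n) W'(α̃) with α̃(0) = λ > 0, α̃'(0) = 0, defined on (−l, l). Then ζ(x) := α̃(|x|) satisfies Δζ ≤ W'(ζ) on the annulus 0 < |x| < l in ℝⁿ, i.e. ζ is a supersolution of Δu = W'(u). -/

import Mathlib

open MeasureTheory Set

theorem radial_supersolution
    (W : ℝ → ℝ) (hW : ContDiff ℝ 2 W) (hWnn : ∀ t, 0 ≤ W t)
    (hWconv : ConvexOn ℝ Set.univ W) (hWvan : ∀ t, W t = 0 ↔ t = 0)
    (hWint : IntegrableOn (fun u => 1 / Real.sqrt (W u)) {u : ℝ | 1 < |u|})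
    (n : ℕ) (hn : 1 ≤ n) (lam l : ℝ) (hlam : 0 < lam) (hl : 0 < l)
    (α α' : ℝ → ℝ)
    (hα0 : α 0 = lam) (hα'0 : α' 0 = 0)
    (hode : ∀ r ∈ Ioo (-l) l,
      HasDerivAt α (α' r) r ∧ HasDerivAt α' ((1 / n) * deriv W (α r)) r) :
    -- ζ(x) = α(|x|) is a supersolution of Δu = W'(u): in radial coordinates,
    -- Δζ = α''(r) + ((n-1)/r) α'(r) ≤ W'(α(r)) for 0 < r < l.
    ∀ r ∈ Ioo (0:ℝ) l,
      (1 / n) * deriv W (α r) + ((n - 1 : ℝ) / r) * α' r ≤ deriv W (α r) := by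
  have hn1 : (1:ℝ) ≤ (n:ℝ) := by exact_mod_cast hn
  have hnpos : (0:ℝ) < (n:ℝ) := lt_of_lt_of_le one_pos hn1
  have hWd : Differentiable ℝ W := hW.differentiable (by norm_num)
  have hWmono : Monotone (deriv W) := by
    have h := hWconv.monotoneOn_deriv (fun x _ => hWd x)
    exact monotoneOn_univ.mp h
  have hW'pos : ∀ t : ℝ, 0 < t → 0 < deriv W t := by
    intro t ht
    have hWt : 0 < W t :=
      lt_of_le_of_ne (hWnn t) (fun h => ht.ne' ((hWvan t).mp h.symm))
    obtain ⟨c, hc, hceq⟩ := exists_deriv_eq_slope W ht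
      hWd.continuous.continuousOn hWd.differentiableOn
    have h0 : W 0 = 0 := (hWvan 0).mpr rfl
    have hc' : 0 < deriv W c := by
      rw [hceq, h0, sub_zero, sub_zero]
      positivity
    exact lt_of_lt_of_le hc' (hWmono hc.2.le)
  -- key lemma: if α is positive on (0,b) then α is strictly monotone on [0,b]
  have key : ∀ b : ℝ, 0 < b → b < l → (∀ s ∈ Ioo (0:ℝ) b, 0 < α s) →
      StrictMonoOn α (Icc 0 b) := by
    intro b hb hbl hpos
    have hsub : Icc (0:ℝ) b ⊆ Ioo (-l) l := fun x hx =>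
      ⟨lt_of_lt_of_le (neg_lt_zero.mpr hl) hx.1, lt_of_le_of_lt hx.2 hbl⟩
    have hαcont : ContinuousOn α (Icc 0 b) := fun x hx =>
      ((hode x (hsub hx)).1.continuousAt).continuousWithinAt
    have hα'cont : ContinuousOn α' (Icc 0 b) := fun x hx =>
      ((hode x (hsub hx)).2.continuousAt).continuousWithinAt
    have hα'mono : StrictMonoOn α' (Icc 0 b) := by
      apply strictMonoOn_of_deriv_pos (convex_Icc 0 b) hα'cont
      intro x hx
      rw [interior_Icc] at hx
      rw [(hode x (hsub (Ioo_subset_Icc_self hx))).2.deriv]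
      exact mul_pos (one_div_pos.mpr hnpos) (hW'pos (α x) (hpos x hx))
    apply strictMonoOn_of_deriv_pos (convex_Icc 0 b) hαcont
    intro x hx
    rw [interior_Icc] at hx
    rw [(hode x (hsub (Ioo_subset_Icc_self hx))).1.deriv]
    have h := hα'mono (left_mem_Icc.mpr hb.le) (Ioo_subset_Icc_self hx) hx.1
    rwa [hα'0] at h
  -- α stays ≥ lam on [0, l)
  have hge : ∀ r ∈ Ico (0:ℝ) l, lam ≤ α r := by
    by_contra hcon
    push_neg at hcon
    obtain ⟨r₁, hr₁, hr₁lt⟩ := hcon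
    have hr₁0 : 0 < r₁ := by
      rcases eq_or_lt_of_le hr₁.1 with h | h
      · exfalso; rw [← h, hα0] at hr₁lt; exact lt_irrefl _ hr₁lt
      · exact h
    have hc0 : ContinuousAt α 0 := (hode 0 ⟨neg_lt_zero.mpr hl, hl⟩).1.continuousAt
    obtain ⟨δ₀, hδ₀pos, hδ₀⟩ := Metric.continuousAt_iff.mp hc0 (lam/2) (by linarith)
    set δ := min (δ₀/2) (r₁/2) with hδdef
    have hδpos : 0 < δ := lt_min (by linarith) (by linarith)
    have hδr₁ : δ ≤ r₁/2 := min_le_right _ _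
    have hδl : δ < l := by have := hr₁.2; linarith
    have hδsmall : ∀ s ∈ Icc (0:ℝ) δ, lam/2 < α s := by
      intro s hs
      have hd : dist s 0 < δ₀ := by
        rw [Real.dist_eq, sub_zero, abs_of_nonneg hs.1]
        have h1 : s ≤ δ := hs.2
        have h2 : δ ≤ δ₀/2 := min_le_left _ _
        linarith
      have h := hδ₀ hd
      rw [Real.dist_eq, hα0] at h
      have h2 := abs_lt.mp h
      linarith [h2.1]
    have hmono0 : StrictMonoOn α (Icc 0 δ) := key δ hδpos hδl
      (fun s hs => lt_trans (by linarith) (hδsmall s (Ioo_subset_Icc_self hs)))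
    have hδge : ∀ s ∈ Icc (0:ℝ) δ, lam ≤ α s := by
      intro s hs
      rcases eq_or_lt_of_le hs.1 with h | h
      · rw [← h, hα0]
      · have h2 : α 0 < α s := hmono0 (left_mem_Icc.mpr hδpos.le) hs h
        rw [hα0] at h2
        exact h2.le
    have hαδ : lam < α δ := by
      rw [← hα0]
      exact hmono0 (left_mem_Icc.mpr hδpos.le) (right_mem_Icc.mpr hδpos.le) hδpos
    set B := Icc δ r₁ ∩ α ⁻¹' Iic lam with hBdef
    have hδr₁' : δ ≤ r₁ := by linarith
    have hsub2 : Icc δ r₁ ⊆ Ioo (-l) l := fun x hx =>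
      ⟨by have := hx.1; linarith, lt_of_le_of_lt hx.2 hr₁.2⟩
    have hcont2 : ContinuousOn α (Icc δ r₁) := fun x hx =>
      ((hode x (hsub2 hx)).1.continuousAt).continuousWithinAt
    have hBclosed : IsClosed B :=
      hcont2.preimage_isClosed_of_isClosed isClosed_Icc isClosed_Iic
    have hBne : B.Nonempty := ⟨r₁, ⟨hδr₁', le_refl _⟩, le_of_lt hr₁lt⟩
    have hBbdd : BddBelow B := ⟨δ, fun x hx => hx.1.1⟩
    set r₀ := sInf B with hr₀def
    have hr₀mem : r₀ ∈ B := hBclosed.csInf_mem hBne hBbdd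
    have hr₀δ : δ ≤ r₀ := hr₀mem.1.1
    have hr₀r₁ : r₀ ≤ r₁ := hr₀mem.1.2
    have hr₀lam : α r₀ ≤ lam := hr₀mem.2
    have hr₀δ' : δ < r₀ := by
      rcases eq_or_lt_of_le hr₀δ with h | h
      · exfalso; rw [← h] at hr₀lam; linarith
      · exact h
    have hposr₀ : ∀ s ∈ Ioo (0:ℝ) r₀, 0 < α s := by
      intro s hs
      rcases le_or_gt s δ with h | h
      · linarith [hδge s ⟨hs.1.le, h⟩]
      · have hsB : s ∉ B := fun hmem => not_lt.mpr (csInf_le hBbdd hmem) hs.2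
        have hs' : ¬ (α s ≤ lam) := fun hle =>
          hsB ⟨⟨h.le, le_trans hs.2.le hr₀r₁⟩, hle⟩
        linarith [not_le.mp hs']
    have hsm := key r₀ (lt_trans hδpos hr₀δ') (lt_of_le_of_lt hr₀r₁ hr₁.2) hposr₀
    have hfin : lam < α r₀ := by
      rw [← hα0]
      exact hsm (left_mem_Icc.mpr (le_trans hδpos.le hr₀δ))
        (right_mem_Icc.mpr (le_trans hδpos.le hr₀δ)) (lt_trans hδpos hr₀δ')
    linarith
  -- final step via MVT on α'
  intro r hr
  have hrsub : Icc (0:ℝ) r ⊆ Ioo (-l) l := fun x hx =>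
    ⟨lt_of_lt_of_le (neg_lt_zero.mpr hl) hx.1, lt_of_le_of_lt hx.2 hr.2⟩
  have hmonor : StrictMonoOn α (Icc 0 r) := key r hr.1 hr.2
    (fun s hs => lt_of_lt_of_le hlam (hge s ⟨hs.1.le, lt_trans hs.2 hr.2⟩))
  have hα'cont : ContinuousOn α' (Icc 0 r) := fun x hx =>
    ((hode x (hrsub hx)).2.continuousAt).continuousWithinAt
  obtain ⟨c, hc, hceq⟩ := exists_hasDerivAt_eq_slope α'
    (fun x => (1 / n) * deriv W (α x)) hr.1 hα'cont
    (fun x hx => (hode x (hrsub (Ioo_subset_Icc_self hx))).2)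
  rw [hα'0, sub_zero, sub_zero] at hceq
  have hrne : r ≠ 0 := ne_of_gt hr.1
  have hα'r : α' r = r * ((1 / (n:ℝ)) * deriv W (α c)) := by
    rw [hceq]; field_simp
  have hαcr : α c ≤ α r :=
    (hmonor (Ioo_subset_Icc_self hc) (right_mem_Icc.mpr hr.1.le) hc.2).le
  have hWle : deriv W (α c) ≤ deriv W (α r) := hWmono hαcr
  set D := deriv W (α r) with hD
  set Dc := deriv W (α c) with hDc
  rw [hα'r]
  have heq : (1:ℝ)/(n:ℝ) * D + ((n:ℝ) - 1)/r * (r * (1/(n:ℝ) * Dc))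
      = (D + ((n:ℝ) - 1) * Dc) / (n:ℝ) := by
    field_simp
  rw [heq, div_le_iff₀ hnpos]
  nlinarith [mul_le_mul_of_nonneg_left hWle (by linarith : (0:ℝ) ≤ (n:ℝ) - 1)]
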